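/- Let 𝔤 ⊆ gl(E) be a real Lie subalgebra stable under adjoint X ↦ X*. Then the radical of 𝔤 is contained in the center z(𝔤), and consequently [𝔤,𝔤] is semisimple. -/

import Mathlib

attribute [local instance 100] LieRing.ofAssociativeRing

open LinearMap (trace adjoint)

noncomputable section Aux

namespace SelfAdjointAux

variable {E : Type*} [NormedAddCommGroup E] [InnerProductSpace ℝ E] [FiniteDimensional ℝ E]

local notation "⟪" x ", " y "⟫" => @inner ℝ _ _ x y

/-- Trace via an orthonormal basis. -/
lemma trace_eq_sum_inner (T : Module.End ℝ E) :
    trace ℝ E T = ∑ i, ⟪(stdOrthonormalBasis ℝ E) i, T ((stdOrthonormalBasis ℝ E) i)⟫ := by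
  set b := stdOrthonormalBasis ℝ E
  rw [LinearMap.trace_eq_matrix_trace ℝ b.toBasis, Matrix.trace]
  congr 1
  ext i
  rw [Matrix.diag_apply, LinearMap.toMatrix_apply, b.coe_toBasis_repr_apply,
    b.repr_apply_apply, b.coe_toBasis]

/-- The Frobenius bilinear form on endomorphisms: `Φ X Y = tr (Y* ∘ X)`. -/
def Phi : LinearMap.BilinForm ℝ (Module.End ℝ E) :=
  LinearMap.mk₂ ℝ (fun X Y => trace ℝ E (adjoint Y * X))
    (fun X X' Y => by rw [mul_add, map_add])
    (fun c X Y => by rw [mul_smul_comm, map_smul, smul_eq_mul])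
    (fun Y X X' => by rw [map_add, add_mul, map_add])
    (fun c Y X => by
      rw [map_smulₛₗ]
      simp [smul_mul_assoc])

lemma Phi_apply (X Y : Module.End ℝ E) : Phi X Y = trace ℝ E (adjoint Y * X) := rfl

lemma Phi_eq_sum (X Y : Module.End ℝ E) :
    Phi X Y = ∑ i, ⟪Y ((stdOrthonormalBasis ℝ E) i), X ((stdOrthonormalBasis ℝ E) i)⟫ := by
  rw [Phi_apply, trace_eq_sum_inner]
  refine Finset.sum_congr rfl fun i _ => ?_
  rw [Module.End.mul_apply, LinearMap.adjoint_inner_right]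

lemma Phi_symm (X Y : Module.End ℝ E) : Phi X Y = Phi Y X := by
  rw [Phi_eq_sum, Phi_eq_sum]
  exact Finset.sum_congr rfl fun i _ => real_inner_comm _ _

lemma Phi_definite {X : Module.End ℝ E} (h : Phi X X = 0) : X = 0 := by
  rw [Phi_eq_sum] at h
  have hzero : ∀ i, X ((stdOrthonormalBasis ℝ E) i) = 0 := by
    intro i
    have := (Finset.sum_eq_zero_iff_of_nonneg
      (fun i _ => real_inner_self_nonneg (x := X ((stdOrthonormalBasis ℝ E) i)))).mp h i
      (Finset.mem_univ i)
    exact inner_self_eq_zero.mp this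
  refine (stdOrthonormalBasis ℝ E).toBasis.ext fun i => ?_
  rw [(stdOrthonormalBasis ℝ E).coe_toBasis]
  simpa using hzero i

lemma Phi_invariant (Z X Y : Module.End ℝ E) :
    Phi ⁅Z, X⁆ Y = Phi X ⁅adjoint Z, Y⁆ := by
  have h1 : Phi ⁅Z, X⁆ Y
      = trace ℝ E (adjoint Y * Z * X) - trace ℝ E (adjoint Y * X * Z) := by
    rw [Phi_apply, Ring.lie_def, mul_sub, map_sub, mul_assoc, mul_assoc]
  have hadj1 : adjoint (adjoint Z * Y) = adjoint Y * Z := by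
    rw [Module.End.mul_eq_comp, LinearMap.adjoint_comp, LinearMap.adjoint_adjoint,
      Module.End.mul_eq_comp]
  have hadj2 : adjoint (Y * adjoint Z) = Z * adjoint Y := by
    rw [Module.End.mul_eq_comp, LinearMap.adjoint_comp, LinearMap.adjoint_adjoint,
      Module.End.mul_eq_comp]
  have h2 : Phi X ⁅adjoint Z, Y⁆
      = trace ℝ E (adjoint Y * Z * X) - trace ℝ E (Z * adjoint Y * X) := by
    rw [Phi_apply, Ring.lie_def, map_sub, sub_mul, map_sub, hadj1, hadj2]
  rw [h1, h2]
  congr 1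
  rw [LinearMap.trace_mul_comm, ← mul_assoc]


section Subalg

variable (L : LieSubalgebra ℝ (Module.End ℝ E))

instance : FiniteDimensional ℝ ↥L := by
  infer_instance

/-- Frobenius form restricted to `L`. -/
def BL : LinearMap.BilinForm ℝ ↥L :=
  LinearMap.mk₂ ℝ (fun x y => Phi (x : Module.End ℝ E) (y : Module.End ℝ E))
    (fun x x' y => by
      rw [show ((x + x' : ↥L) : Module.End ℝ E) = (x : Module.End ℝ E) + (x' : Module.End ℝ E)
        from rfl, map_add, LinearMap.add_apply])
    (fun c x y => by
      rw [show ((c • x : ↥L) : Module.End ℝ E) = c • (x : Module.End ℝ E) from rfl,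
        map_smul, LinearMap.smul_apply, smul_eq_mul])
    (fun x y y' => by
      rw [show ((y + y' : ↥L) : Module.End ℝ E) = (y : Module.End ℝ E) + (y' : Module.End ℝ E)
        from rfl, map_add])
    (fun c x y => by
      rw [show ((c • y : ↥L) : Module.End ℝ E) = c • (y : Module.End ℝ E) from rfl,
        map_smul, smul_eq_mul])

lemma BL_apply (x y : ↥L) : BL L x y = Phi (x : Module.End ℝ E) (y : Module.End ℝ E) := rfl

lemma BL_symm (x y : ↥L) : BL L x y = BL L y x := Phi_symm _ _

lemma BL_refl : (BL L).IsRefl := fun x y h => by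
  rw [BL_apply, Phi_symm]; exact h

lemma BL_definite {x : ↥L} (h : BL L x x = 0) : x = 0 := by
  have := Phi_definite (X := (x : Module.End ℝ E)) h
  exact Subtype.ext (by simpa using this)

variable {L} (hadj : ∀ X ∈ L, LinearMap.adjoint X ∈ L)

/-- The adjoint as an operation on `L`. -/
def adj (x : ↥L) : ↥L := ⟨adjoint (x : Module.End ℝ E), hadj _ x.2⟩

lemma BL_invariant (z x y : ↥L) : BL L ⁅z, x⁆ y = BL L x ⁅adj hadj z, y⁆ := by
  have h := Phi_invariant (z : Module.End ℝ E) (x : Module.End ℝ E) (y : Module.End ℝ E)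
  simpa [BL_apply, adj, LieSubalgebra.coe_bracket] using h

/-- The orthogonal complement of a Lie ideal is a Lie ideal. -/
noncomputable def ortho (I : LieIdeal ℝ ↥L) : LieIdeal ℝ ↥L where
  toSubmodule := (BL L).orthogonal (LieSubmodule.toSubmodule I)
  lie_mem := by
    intro x m hm
    have hm' : ∀ n ∈ LieSubmodule.toSubmodule I, BL L n m = 0 := hm
    intro n hn
    show BL L n ⁅x, m⁆ = 0
    have hmem : ⁅adj hadj x, n⁆ ∈ LieSubmodule.toSubmodule I := by
      rw [LieSubmodule.mem_toSubmodule] at hn ⊢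
      exact LieSubmodule.lie_mem I hn
    calc BL L n ⁅x, m⁆ = BL L ⁅x, m⁆ n := BL_symm L _ _
      _ = BL L m ⁅adj hadj x, n⁆ := BL_invariant hadj x m n
      _ = BL L ⁅adj hadj x, n⁆ m := BL_symm L _ _
      _ = 0 := hm' _ hmem

lemma ortho_toSubmodule (I : LieIdeal ℝ ↥L) :
    LieSubmodule.toSubmodule (ortho hadj I) = (BL L).orthogonal (LieSubmodule.toSubmodule I) :=
  rfl

lemma isCompl_ortho (I : LieIdeal ℝ ↥L) :
    IsCompl (LieSubmodule.toSubmodule I)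
      ((BL L).orthogonal (LieSubmodule.toSubmodule I)) := by
  apply LinearMap.BilinForm.isCompl_orthogonal_of_restrict_nondegenerate (BL_refl L)
  constructor
  all_goals
    rintro ⟨x, hx⟩ h
    have h' := h ⟨x, hx⟩
    rw [LinearMap.BilinForm.restrict_apply] at h'
    exact Subtype.ext (by simpa using BL_definite L h')

lemma inf_ortho_eq_bot (I : LieIdeal ℝ ↥L) : I ⊓ ortho hadj I = ⊥ := by
  rw [← LieSubmodule.toSubmodule_inj, LieSubmodule.inf_toSubmodule,
    LieSubmodule.bot_toSubmodule, ortho_toSubmodule]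
  exact (isCompl_ortho I).disjoint.eq_bot

lemma sup_ortho_eq_top (I : LieIdeal ℝ ↥L) : I ⊔ ortho hadj I = ⊤ := by
  rw [← LieSubmodule.toSubmodule_inj, LieSubmodule.sup_toSubmodule,
    LieSubmodule.top_toSubmodule, ortho_toSubmodule]
  exact (isCompl_ortho I).codisjoint.eq_top

include hadj in
set_option synthInstance.maxHeartbeats 400000 in
lemma top_lie_eq (I : LieIdeal ℝ ↥L) : ⁅(⊤ : LieIdeal ℝ ↥L), I⁆ = ⁅I, I⁆ := by
  refine le_antisymm ?_ (LieSubmodule.mono_lie_left _ le_top)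
  calc ⁅(⊤ : LieIdeal ℝ ↥L), I⁆ = ⁅I ⊔ ortho hadj I, I⁆ := by rw [sup_ortho_eq_top hadj I]
    _ = ⁅I, I⁆ ⊔ ⁅ortho hadj I, I⁆ := LieSubmodule.sup_lie _ _ _
    _ ≤ ⁅I, I⁆ ⊔ (ortho hadj I ⊓ I) := sup_le_sup_left (LieSubmodule.lie_le_inf _ _) _
    _ = ⁅I, I⁆ ⊔ (I ⊓ ortho hadj I) := by rw [inf_comm]
    _ = ⁅I, I⁆ := by rw [inf_ortho_eq_bot hadj I, sup_bot_eq]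

include hadj in
set_option synthInstance.maxHeartbeats 400000 in
lemma derived_radical_eq_bot :
    (⁅LieAlgebra.radical ℝ ↥L, LieAlgebra.radical ℝ ↥L⁆ : LieIdeal ℝ ↥L) = ⊥ := by
  set R : LieIdeal ℝ ↥L := LieAlgebra.radical ℝ ↥L with hR
  set D : LieIdeal ℝ ↥L := ⁅R, R⁆ with hD
  have hDR : D ≤ R := (LieSubmodule.lie_le_inf _ _).trans inf_le_left
  set W : LieIdeal ℝ ↥L := ortho hadj D ⊓ R with hW
  have hdecomp : D ⊔ W = R := by
    rw [hW, ← sup_inf_assoc_of_le _ hDR, sup_ortho_eq_top hadj D, top_inf_eq]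
  have hDW : (⁅D, W⁆ : LieIdeal ℝ ↥L) = ⊥ := by
    rw [eq_bot_iff]
    calc ⁅D, W⁆ ≤ D ⊓ W := LieSubmodule.lie_le_inf _ _
      _ ≤ D ⊓ ortho hadj D := inf_le_inf_left _ (hW ▸ inf_le_left)
      _ = ⊥ := inf_ortho_eq_bot hadj D
  have hWD : (⁅W, D⁆ : LieIdeal ℝ ↥L) = ⊥ := by rw [LieSubmodule.lie_comm]; exact hDW
  have hWW : (⁅W, W⁆ : LieIdeal ℝ ↥L) = ⊥ := by
    rw [eq_bot_iff]
    have h1 : (⁅W, W⁆ : LieIdeal ℝ ↥L) ≤ D := by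
      rw [hD]
      exact LieSubmodule.mono_lie (hW ▸ inf_le_right) (hW ▸ inf_le_right)
    have h2 : (⁅W, W⁆ : LieIdeal ℝ ↥L) ≤ ortho hadj D :=
      (LieSubmodule.lie_le_inf _ _).trans (inf_le_left.trans (hW ▸ inf_le_left))
    exact le_trans (le_inf h1 h2) (le_of_eq (inf_ortho_eq_bot hadj D))
  have hperfect : (⁅D, D⁆ : LieIdeal ℝ ↥L) = D := by
    refine le_antisymm ((LieSubmodule.lie_le_inf _ _).trans inf_le_left) (le_of_eq ?_)
    calc D = ⁅D ⊔ W, D ⊔ W⁆ := by rw [hdecomp, hD]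
      _ = (⁅D, D⁆ ⊔ ⁅D, W⁆) ⊔ (⁅W, D⁆ ⊔ ⁅W, W⁆) := by
          rw [LieSubmodule.sup_lie, LieSubmodule.lie_sup, LieSubmodule.lie_sup]
      _ = ⁅D, D⁆ := by rw [hDW, hWD, hWW, sup_bot_eq, sup_bot_eq, sup_bot_eq]
  have hsolv : LieAlgebra.IsSolvable ↥D :=
    LieAlgebra.le_solvable_ideal_solvable hDR (LieAlgebra.radicalIsSolvable ℝ ↥L)
  obtain ⟨k, hk⟩ := @LieAlgebra.IsSolvable.solvable ℝ ↥D _ _ _ hsolv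
  have hder : ∀ n, LieAlgebra.derivedSeriesOfIdeal ℝ ↥L n D = D := by
    intro n
    induction n with
    | zero => exact LieAlgebra.derivedSeriesOfIdeal_zero ℝ ↥L D
    | succ m ih => rw [LieAlgebra.derivedSeriesOfIdeal_succ, ih, hperfect]
  have hbot : D = ⊥ := by
    have h := (LieIdeal.derivedSeries_eq_bot_iff D k).mp hk
    rw [hder k] at h
    exact h
  exact hbot

include hadj in
lemma lie_eq_zero_of_mem_radical {x : ↥L} (hx : x ∈ LieAlgebra.radical ℝ ↥L) (y : ↥L) :
    ⁅x, y⁆ = 0 := by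
  have h : ⁅x, y⁆ ∈ (⁅LieAlgebra.radical ℝ ↥L, (⊤ : LieIdeal ℝ ↥L)⁆ : LieIdeal ℝ ↥L) :=
    LieSubmodule.lie_mem_lie (hx := hx) (hm := LieSubmodule.mem_top y)
  rw [LieSubmodule.lie_comm, top_lie_eq hadj, derived_radical_eq_bot hadj] at h
  exact (LieSubmodule.mem_bot _).mp h

include hadj in
lemma radical_le_center' : LieAlgebra.radical ℝ ↥L ≤ LieAlgebra.center ℝ ↥L := by
  intro x hx
  show x ∈ LieModule.maxTrivSubmodule ℝ ↥L ↥L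
  rw [LieModule.mem_maxTrivSubmodule]
  intro y
  rw [← lie_skew, lie_eq_zero_of_mem_radical hadj hx y, neg_zero]

include hadj in
set_option maxHeartbeats 1000000 in
set_option synthInstance.maxHeartbeats 400000 in
lemma radical_derived_eq_bot :
    LieAlgebra.radical ℝ
      (↥(⁅(⊤ : LieIdeal ℝ ↥L), (⊤ : LieIdeal ℝ ↥L)⁆ : LieIdeal ℝ ↥L)) = ⊥ := by
  set R : LieIdeal ℝ ↥L := LieAlgebra.radical ℝ ↥L with hR
  set S : LieIdeal ℝ ↥L := ⁅(⊤ : LieIdeal ℝ ↥L), (⊤ : LieIdeal ℝ ↥L)⁆ with hS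
  have hRtop : (⁅R, (⊤ : LieIdeal ℝ ↥L)⁆ : LieIdeal ℝ ↥L) = ⊥ := by
    rw [LieSubmodule.lie_comm, top_lie_eq hadj, derived_radical_eq_bot hadj]
  have hS_le : S ≤ ortho hadj R := by
    calc S = ⁅R ⊔ ortho hadj R, (⊤ : LieIdeal ℝ ↥L)⁆ := by rw [sup_ortho_eq_top hadj]
      _ = ⁅R, (⊤ : LieIdeal ℝ ↥L)⁆ ⊔ ⁅ortho hadj R, (⊤ : LieIdeal ℝ ↥L)⁆ :=
          LieSubmodule.sup_lie _ _ _
      _ ≤ ⊥ ⊔ ortho hadj R := sup_le_sup (le_of_eq hRtop) (LieSubmodule.lie_le_left _ _)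
      _ = ortho hadj R := bot_sup_eq _
  have hV : (ortho hadj S ⊓ ortho hadj R : LieIdeal ℝ ↥L) = ⊥ := by
    set V : LieIdeal ℝ ↥L := ortho hadj S ⊓ ortho hadj R with hVdef
    have habV : (⁅V, V⁆ : LieIdeal ℝ ↥L) = ⊥ := by
      rw [eq_bot_iff]
      refine le_trans (le_inf ?_ ?_) (le_of_eq (inf_ortho_eq_bot hadj S))
      · exact (LieSubmodule.mono_lie le_top le_top).trans (le_of_eq hS.symm)
      · exact (LieSubmodule.lie_le_inf _ _).trans (inf_le_left.trans (hVdef ▸ inf_le_left))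
    have habelian : IsLieAbelian ↥V := by
      rw [LieAlgebra.abelian_iff_derived_one_eq_bot, LieAlgebra.derivedSeriesOfIdeal_succ,
        LieAlgebra.derivedSeriesOfIdeal_zero]
      exact habV
    have hsolv : LieAlgebra.IsSolvable ↥V := @LieAlgebra.ofAbelianIsSolvable ↥V _ habelian
    have hle : V ≤ R := (LieAlgebra.LieIdeal.solvable_iff_le_radical ℝ ↥L V).mp hsolv
    have h2 : V ≤ R ⊓ ortho hadj R := le_inf hle (hVdef ▸ inf_le_right)
    rw [inf_ortho_eq_bot hadj R] at h2
    exact le_bot_iff.mp h2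
  have hC_eq : ortho hadj R = S := by
    have h : ortho hadj R = S ⊔ ortho hadj S ⊓ ortho hadj R := by
      rw [← sup_inf_assoc_of_le _ hS_le, sup_ortho_eq_top hadj S, top_inf_eq]
    rw [h, hV, sup_bot_eq]
  have hsup : R ⊔ S = ⊤ := by rw [← hC_eq]; exact sup_ortho_eq_top hadj R
  have hinf : R ⊓ S = ⊥ := by rw [← hC_eq]; exact inf_ortho_eq_bot hadj R
  have key : ∀ A : LieIdeal ℝ ↥S, IsLieAbelian ↥A → A = ⊥ := by
    intro A hA
    set f : ↥S →ₗ[ℝ] ↥L := (S.incl : ↥S →ₗ⁅ℝ⁆ ↥L).toLinearMap with hf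
    have hf_apply : ∀ a : ↥S, f a = (a : ↥L) := fun a => rfl
    set Ahat : LieIdeal ℝ ↥L :=
      { toSubmodule := Submodule.map f (LieSubmodule.toSubmodule A)
        lie_mem := by
          intro x m hm
          obtain ⟨a, ha, rfl⟩ := hm
          show ⁅x, f a⁆ ∈ Submodule.map f (LieSubmodule.toSubmodule A)
          have hx : x ∈ R ⊔ S := hsup ▸ LieSubmodule.mem_top x
          rw [LieSubmodule.mem_sup] at hx
          obtain ⟨r, hr, t, ht, hx⟩ := hx
          rw [← hx, add_lie]
          refine Submodule.add_mem _ ?_ ?_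
          · rw [lie_eq_zero_of_mem_radical hadj hr (f a)]
            exact Submodule.zero_mem _
          · have hbr : ⁅(⟨t, ht⟩ : ↥S), a⁆ ∈ A :=
              LieSubmodule.lie_mem A ((LieSubmodule.mem_toSubmodule A).mp ha)
            have hmem : f ⁅(⟨t, ht⟩ : ↥S), a⁆ ∈ Submodule.map f (LieSubmodule.toSubmodule A) :=
              Submodule.mem_map_of_mem ((LieSubmodule.mem_toSubmodule A).mpr hbr)
            have heq : f ⁅(⟨t, ht⟩ : ↥S), a⁆ = ⁅t, f a⁆ := by
              show S.incl ⁅(⟨t, ht⟩ : ↥S), a⁆ = ⁅t, S.incl a⁆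
              rw [LieHom.map_lie, LieIdeal.incl_apply]
            rwa [heq] at hmem } with hAhat
    have hAhat_le_S : Ahat ≤ S := by
      intro z hz
      obtain ⟨a, ha, rfl⟩ := hz
      exact a.2
    have hAhat_ab : (⁅Ahat, Ahat⁆ : LieIdeal ℝ ↥L) = ⊥ := by
      rw [LieSubmodule.lie_eq_bot_iff]
      intro x hx y hy
      obtain ⟨a, ha, rfl⟩ := hx
      obtain ⟨b, hb, rfl⟩ := hy
      have h0 : (⁅a, b⁆ : ↥S) = 0 := by
        have h1 : ⁅(⟨a, (LieSubmodule.mem_toSubmodule A).mp ha⟩ : ↥A),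
            (⟨b, (LieSubmodule.mem_toSubmodule A).mp hb⟩ : ↥A)⁆ = 0 :=
          hA.trivial _ _
        have h2 := congrArg A.incl h1
        rwa [LieHom.map_lie, LieIdeal.incl_apply, LieIdeal.incl_apply, map_zero] at h2
      calc ⁅f a, f b⁆ = f ⁅a, b⁆ := by
            show ⁅S.incl a, S.incl b⁆ = S.incl ⁅a, b⁆
            rw [LieHom.map_lie]
        _ = 0 := by rw [h0, map_zero]
    have habelian : IsLieAbelian ↥Ahat := by
      rw [LieAlgebra.abelian_iff_derived_one_eq_bot, LieAlgebra.derivedSeriesOfIdeal_succ,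
        LieAlgebra.derivedSeriesOfIdeal_zero]
      exact hAhat_ab
    have hsolv : LieAlgebra.IsSolvable ↥Ahat :=
      @LieAlgebra.ofAbelianIsSolvable ↥Ahat _ habelian
    have hle : Ahat ≤ R := (LieAlgebra.LieIdeal.solvable_iff_le_radical ℝ ↥L Ahat).mp hsolv
    have hbot : Ahat = ⊥ := by
      have h2 : Ahat ≤ R ⊓ S := le_inf hle hAhat_le_S
      rw [hinf] at h2
      exact le_bot_iff.mp h2
    rw [LieSubmodule.eq_bot_iff]
    intro a ha
    have hm : f a ∈ Ahat := Submodule.mem_map_of_mem ((LieSubmodule.mem_toSubmodule A).mpr ha)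
    rw [hbot] at hm
    have h3 : (a : ↥L) = 0 := (LieSubmodule.mem_bot _).mp hm
    exact Subtype.ext (by simpa using h3)
  haveI htr : LieAlgebra.HasTrivialRadical ℝ ↥S :=
    (LieAlgebra.hasTrivialRadical_iff_no_abelian_ideals ℝ ↥S).mpr key
  exact LieAlgebra.radical_eq_bot


end Subalg

end SelfAdjointAux

end Aux

theorem radical_le_center_of_selfadjoint
    {E : Type*} [NormedAddCommGroup E] [InnerProductSpace ℝ E] [FiniteDimensional ℝ E]
    (L : LieSubalgebra ℝ (Module.End ℝ E))
    (hadj : ∀ X ∈ L, LinearMap.adjoint X ∈ L) :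
    LieAlgebra.radical ℝ L ≤ LieAlgebra.center ℝ L ∧
    LieAlgebra.radical ℝ
      (↥(⁅(⊤ : LieIdeal ℝ L), (⊤ : LieIdeal ℝ L)⁆ : LieIdeal ℝ L)) = ⊥ := by
  exact ⟨SelfAdjointAux.radical_le_center' hadj, SelfAdjointAux.radical_derived_eq_bot hadj⟩
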